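/- arXiv:1007.0713 — 2 statements merged into one kernel-verified Lean document; each statement's English description precedes it below -/
import Mathlib

section
/- Let q : ℝ → ℝ and λ₀ > 0. There is no function u : ℝ → ℂ, twice differentiable on (0,∞), satisfying all of the following: (i) -u''(x) + (2/x²)·u(x) + q(x)·u(x) = λ₀·u(x) for all x > 0; (ii) u(x) → 0 as x → 0⁺ and u'(x) tends to a finite limit as x → 0⁺; (iii) u(x) − i·√λ₀·exp(i·√λ₀·x) → 0 and u'(x) + λ₀·exp(i·√λ₀·x) → 0 as x → ∞. -/
open Complex Filter Topology

private lemma mul_tendsto_zero_of_bounded {l : Filter ℝ} {f g : ℝ → ℂ} {C : ℝ}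
    (hf : Tendsto f l (nhds 0)) (hg : ∀ x, ‖g x‖ ≤ C) :
    Tendsto (fun x => f x * g x) l (nhds 0) := by
  have h0 : Tendsto (fun x => ‖f x‖ * C) l (nhds 0) := by
    simpa using hf.norm.mul_const C
  refine squeeze_zero_norm (fun x => ?_) h0
  rw [norm_mul]
  exact mul_le_mul_of_nonneg_left (hg x) (norm_nonneg _)

/-- For real potential `q` and `λ₀ > 0`, there is no solution `u` of
`-u'' + (2/x²)u + q u = λ₀ u` on `(0,∞)` that both vanishes at `0⁺` (with `u'`
tending to a finite limit there) and is asymptotic to the outgoing exponential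
`i√λ₀ e^{i√λ₀ x}` (with derivative `−λ₀ e^{i√λ₀ x}`) at `+∞`. -/
theorem no_solution_with_both_boundary_and_outgoing
    (q : ℝ → ℝ) (μ : ℝ) (hμ : 0 < μ) :
    ¬ ∃ u u' u'' : ℝ → ℂ,
      (∀ x ∈ Set.Ioi (0 : ℝ), HasDerivAt u (u' x) x) ∧
      (∀ x ∈ Set.Ioi (0 : ℝ), HasDerivAt u' (u'' x) x) ∧
      (∀ x ∈ Set.Ioi (0 : ℝ),
        -u'' x + (2 / (x : ℂ) ^ 2) * u x + (q x : ℂ) * u x = (μ : ℂ) * u x) ∧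
      Tendsto u (nhdsWithin 0 (Set.Ioi 0)) (nhds 0) ∧
      (∃ L : ℂ, Tendsto u' (nhdsWithin 0 (Set.Ioi 0)) (nhds L)) ∧
      Tendsto (fun x : ℝ =>
        u x - Complex.I * (Real.sqrt μ : ℂ) * Complex.exp (Complex.I * (Real.sqrt μ : ℂ) * x))
        atTop (nhds 0) ∧
      Tendsto (fun x : ℝ =>
        u' x + (μ : ℂ) * Complex.exp (Complex.I * (Real.sqrt μ : ℂ) * x))
        atTop (nhds 0) := by
  rintro ⟨u, u', u'', hu, hu', heq, h0, ⟨L, hL⟩, hinf, hinf'⟩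
  set s : ℂ := ((Real.sqrt μ : ℝ) : ℂ) with hs
  set E : ℝ → ℂ := fun x => Complex.exp (Complex.I * s * x) with hE
  -- basic facts about E
  have hEnorm : ∀ x : ℝ, ‖E x‖ = 1 := by
    intro x
    simp only [hE, Complex.norm_exp]
    norm_num [Complex.mul_re, Complex.mul_im, hs]
  have hEconj : ∀ x : ℝ, (starRingEnd ℂ) (E x) = Complex.exp (-(Complex.I * s * x)) := by
    intro x
    rw [hE, ← Complex.exp_conj]
    congr 1
    simp [hs, Complex.conj_ofReal]
  have hEmul : ∀ x : ℝ, E x * (starRingEnd ℂ) (E x) = 1 := by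
    intro x
    rw [hEconj, hE, ← Complex.exp_add]
    simp
  -- the Wronskian
  set W : ℝ → ℂ := fun x => u x * (starRingEnd ℂ) (u' x) - u' x * (starRingEnd ℂ) (u x) with hW
  have hWderiv : ∀ x ∈ Set.Ioi (0 : ℝ), HasDerivAt W 0 x := by
    intro x hx
    have h1 := hu x hx
    have h2 := hu' x hx
    have hd : HasDerivAt W
        (u' x * (starRingEnd ℂ) (u' x) + u x * (starRingEnd ℂ) (u'' x)
          - (u'' x * (starRingEnd ℂ) (u x) + u' x * (starRingEnd ℂ) (u' x))) x := by
      exact (h1.mul h2.star).sub (h2.mul h1.star)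
    convert hd using 1
    have hxne : (x : ℂ) ≠ 0 := by
      simp only [ne_eq, Complex.ofReal_eq_zero]
      exact ne_of_gt hx
    have hu2 : u'' x = (2 / (x : ℂ) ^ 2 + (q x : ℂ) - (μ : ℂ)) * u x := by
      have := heq x hx
      linear_combination -this
    have hcu2 : (starRingEnd ℂ) (u'' x)
        = (2 / (x : ℂ) ^ 2 + (q x : ℂ) - (μ : ℂ)) * (starRingEnd ℂ) (u x) := by
      rw [hu2]
      simp [map_mul, map_sub, map_add, map_div₀, map_pow, map_ofNat, Complex.conj_ofReal]
    rw [hcu2, hu2]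
    ring
  -- W is constant on Ioi 0
  have hconst : ∀ x ∈ Set.Ioi (0 : ℝ), ∀ y ∈ Set.Ioi (0 : ℝ), x ≤ y → W y = W x := by
    intro x hx y hy hxy
    have hsub : Set.Icc x y ⊆ Set.Ioi 0 := fun t ht => lt_of_lt_of_le hx ht.1
    have hcont : ContinuousOn W (Set.Icc x y) := fun t ht =>
      ((hWderiv t (hsub ht)).continuousAt).continuousWithinAt
    exact constant_of_has_deriv_right_zero hcont
      (fun t ht => (hWderiv t (hsub (Set.Ico_subset_Icc_self ht))).hasDerivWithinAt)
      y (Set.right_mem_Icc.2 hxy)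
  have hWeq : ∀ x ∈ Set.Ioi (0 : ℝ), W x = W 1 := by
    intro x hx
    rcases le_total x 1 with h | h
    · exact (hconst x hx 1 (by norm_num) h).symm ▸ rfl
    · exact hconst 1 (by norm_num) x hx h
  -- limit at 0⁺ : W → 0
  have hzero : Tendsto W (nhdsWithin 0 (Set.Ioi 0)) (nhds 0) := by
    have : Tendsto W (nhdsWithin 0 (Set.Ioi 0))
        (nhds (0 * (starRingEnd ℂ) L - L * (starRingEnd ℂ) 0)) :=
      (h0.mul hL.star).sub (hL.mul h0.star)
    simpa using this
  have hWtendsto1 : Tendsto W (nhdsWithin 0 (Set.Ioi 0)) (nhds (W 1)) := by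
    refine Tendsto.congr' ?_ tendsto_const_nhds
    filter_upwards [self_mem_nhdsWithin] with x hx
    exact (hWeq x hx).symm
  have hW1 : W 1 = 0 := tendsto_nhds_unique hWtendsto1 hzero
  -- limit at ∞ : W → -2 i μ √μ
  set a : ℝ → ℂ := fun x => Complex.I * s * E x with ha
  set b : ℝ → ℂ := fun x => -(μ : ℂ) * E x with hb
  set e₁ : ℝ → ℂ := fun x => u x - a x with he₁
  set e₂ : ℝ → ℂ := fun x => u' x - b x with he₂
  have he₁0 : Tendsto e₁ atTop (nhds 0) := hinf
  have he₂0 : Tendsto e₂ atTop (nhds 0) := by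
    refine hinf'.congr fun x => ?_
    simp only [he₂, hb]
    ring
  have hconja : ∀ x, (starRingEnd ℂ) (a x) = -Complex.I * s * (starRingEnd ℂ) (E x) := by
    intro x
    simp only [ha, map_mul, Complex.conj_I, hs, Complex.conj_ofReal]
  have hconjb : ∀ x, (starRingEnd ℂ) (b x) = -(μ : ℂ) * (starRingEnd ℂ) (E x) := by
    intro x
    simp [hb, map_mul, Complex.conj_ofReal]
  have hdecomp : ∀ x : ℝ, W x = -2 * Complex.I * (μ : ℂ) * s
      + (e₁ x * (starRingEnd ℂ) (e₂ x) + e₁ x * (starRingEnd ℂ) (b x)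
        + (starRingEnd ℂ) (e₂ x) * a x - e₂ x * (starRingEnd ℂ) (e₁ x)
        - e₂ x * (starRingEnd ℂ) (a x) - (starRingEnd ℂ) (e₁ x) * b x) := by
    intro x
    have hux : u x = e₁ x + a x := by simp [he₁]
    have hux' : u' x = e₂ x + b x := by simp [he₂]
    have hcu : (starRingEnd ℂ) (u x) = (starRingEnd ℂ) (e₁ x) + (starRingEnd ℂ) (a x) := by
      rw [hux, map_add]
    have hcu' : (starRingEnd ℂ) (u' x) = (starRingEnd ℂ) (e₂ x) + (starRingEnd ℂ) (b x) := by
      rw [hux', map_add]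
    have key : a x * (starRingEnd ℂ) (b x) - b x * (starRingEnd ℂ) (a x)
        = -2 * Complex.I * (μ : ℂ) * s := by
      rw [hconja, hconjb]
      simp only [ha, hb]
      have := hEmul x
      linear_combination (-2 * Complex.I * (μ : ℂ) * s) * this
    simp only [hW]
    rw [hcu, hcu', hux, hux']
    linear_combination key
  have hnorm_cb : ∀ x, ‖(starRingEnd ℂ) (b x)‖ ≤ μ := by
    intro x
    rw [RCLike.norm_conj]
    simp only [hb, norm_mul, norm_neg, hEnorm]
    simp [abs_of_pos hμ]
  have hnorm_b : ∀ x, ‖b x‖ ≤ μ := by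
    intro x
    simp only [hb, norm_mul, norm_neg, hEnorm]
    simp [abs_of_pos hμ]
  have hnorm_a : ∀ x, ‖a x‖ ≤ Real.sqrt μ := by
    intro x
    simp only [ha, norm_mul, hEnorm]
    simp [hs, _root_.abs_of_nonneg (Real.sqrt_nonneg μ)]
  have hnorm_ca : ∀ x, ‖(starRingEnd ℂ) (a x)‖ ≤ Real.sqrt μ := by
    intro x
    rw [RCLike.norm_conj]; exact hnorm_a x
  have htop : Tendsto W atTop (nhds (-2 * Complex.I * (μ : ℂ) * s)) := by
    rw [show W = fun x => -2 * Complex.I * (μ : ℂ) * s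
      + (e₁ x * (starRingEnd ℂ) (e₂ x) + e₁ x * (starRingEnd ℂ) (b x)
        + (starRingEnd ℂ) (e₂ x) * a x - e₂ x * (starRingEnd ℂ) (e₁ x)
        - e₂ x * (starRingEnd ℂ) (a x) - (starRingEnd ℂ) (e₁ x) * b x) from funext hdecomp]
    have t1 : Tendsto (fun x => e₁ x * (starRingEnd ℂ) (e₂ x)) atTop (nhds 0) := by
      simpa using he₁0.mul he₂0.star
    have t2 : Tendsto (fun x => e₁ x * (starRingEnd ℂ) (b x)) atTop (nhds 0) :=
      mul_tendsto_zero_of_bounded he₁0 hnorm_cb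
    have t3 : Tendsto (fun x => (starRingEnd ℂ) (e₂ x) * a x) atTop (nhds 0) := by
      refine mul_tendsto_zero_of_bounded ?_ hnorm_a
      simpa using he₂0.star
    have t4 : Tendsto (fun x => e₂ x * (starRingEnd ℂ) (e₁ x)) atTop (nhds 0) := by
      simpa using he₂0.mul he₁0.star
    have t5 : Tendsto (fun x => e₂ x * (starRingEnd ℂ) (a x)) atTop (nhds 0) :=
      mul_tendsto_zero_of_bounded he₂0 hnorm_ca
    have t6 : Tendsto (fun x => (starRingEnd ℂ) (e₁ x) * b x) atTop (nhds 0) := by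
      refine mul_tendsto_zero_of_bounded ?_ hnorm_b
      simpa using he₁0.star
    have : Tendsto (fun x => e₁ x * (starRingEnd ℂ) (e₂ x) + e₁ x * (starRingEnd ℂ) (b x)
        + (starRingEnd ℂ) (e₂ x) * a x - e₂ x * (starRingEnd ℂ) (e₁ x)
        - e₂ x * (starRingEnd ℂ) (a x) - (starRingEnd ℂ) (e₁ x) * b x) atTop (nhds 0) := by
      have := ((((t1.add t2).add t3).sub t4).sub t5).sub t6
      simpa using this
    simpa using tendsto_const_nhds.add this
  have hWtendstop : Tendsto W atTop (nhds (W 1)) := by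
    refine Tendsto.congr' ?_ tendsto_const_nhds
    filter_upwards [eventually_gt_atTop 0] with x hx
    exact (hWeq x hx).symm
  have := tendsto_nhds_unique hWtendstop htop
  rw [hW1] at this
  have hsne : s ≠ 0 := by
    simp [hs, Complex.ofReal_eq_zero, Real.sqrt_eq_zero', not_le]
    exact hμ
  have hμne : (μ : ℂ) ≠ 0 := by
    simp [Complex.ofReal_eq_zero]; exact ne_of_gt hμ
  apply hsne
  have h2 : (-2 : ℂ) * Complex.I * (μ : ℂ) ≠ 0 := by
    simp [Complex.I_ne_zero, hμne]
  field_simp at this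
  exact (mul_eq_zero.mp (neg_eq_zero.mp this.symm)).resolve_left (by simp [Complex.I_ne_zero, hμne])
end

section
/- Let q : ℝ → ℝ and λ₀ > 0. Let φ : ℝ → ℂ and ψ : ℝ → ℂ both be twice differentiable on (0,∞) and both satisfy -f''(x) + (2/x²)·f(x) + q(x)·f(x) = λ₀·f(x) for all x > 0. Suppose φ satisfies the boundary condition at 0: φ(x) → 0 as x → 0⁺ and φ'(x) tends to a finite limit as x → 0⁺; and suppose ψ satisfies the asymptotic condition at infinity: ψ(x) − i·√λ₀·exp(i·√λ₀·x) → 0 and ψ'(x) + λ₀·exp(i·√λ₀·x) → 0 as x → ∞. Then φ and ψ are linearly independent on (0,∞): there is no constant c ∈ ℂ with ψ(x) = c·φ(x) for all x > 0. -/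
open Complex Filter Topology

/-- If `φ` is the regular solution at `0` (vanishing at `0⁺` with
derivative tending to a finite limit) and `ψ` is a solution asymptotic at `+∞` to
the outgoing exponential `i√λ₀ e^{i√λ₀ x}`, both solving
`-f'' + (2/x²)f + q f = λ₀ f` on `(0,∞)` with `λ₀ > 0`, then `ψ` is not a constant
multiple of `φ` on `(0,∞)`. -/
theorem regular_and_outgoing_solutions_linearly_independent
    (q : ℝ → ℝ) (μ : ℝ) (hμ : 0 < μ)
    (φ φ' φ'' ψ ψ' ψ'' : ℝ → ℂ)
    (hφ' : ∀ x ∈ Set.Ioi (0 : ℝ), HasDerivAt φ (φ' x) x)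
    (hφ'' : ∀ x ∈ Set.Ioi (0 : ℝ), HasDerivAt φ' (φ'' x) x)
    (hφeq : ∀ x ∈ Set.Ioi (0 : ℝ),
      -φ'' x + (2 / (x : ℂ) ^ 2) * φ x + (q x : ℂ) * φ x = (μ : ℂ) * φ x)
    (hψ' : ∀ x ∈ Set.Ioi (0 : ℝ), HasDerivAt ψ (ψ' x) x)
    (hψ'' : ∀ x ∈ Set.Ioi (0 : ℝ), HasDerivAt ψ' (ψ'' x) x)
    (hψeq : ∀ x ∈ Set.Ioi (0 : ℝ),
      -ψ'' x + (2 / (x : ℂ) ^ 2) * ψ x + (q x : ℂ) * ψ x = (μ : ℂ) * ψ x)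
    (hφ0 : Tendsto φ (nhdsWithin 0 (Set.Ioi 0)) (nhds 0))
    (hφ'0 : ∃ L : ℂ, Tendsto φ' (nhdsWithin 0 (Set.Ioi 0)) (nhds L))
    (hψasym : Tendsto (fun x : ℝ =>
      ψ x - Complex.I * (Real.sqrt μ : ℂ) * Complex.exp (Complex.I * (Real.sqrt μ : ℂ) * x))
      atTop (nhds 0))
    (hψasym' : Tendsto (fun x : ℝ =>
      ψ' x + (μ : ℂ) * Complex.exp (Complex.I * (Real.sqrt μ : ℂ) * x))
      atTop (nhds 0)) :
    ¬ ∃ c : ℂ, ∀ x ∈ Set.Ioi (0 : ℝ), ψ x = c * φ x := by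
  rintro ⟨c, hc⟩
  set s : ℝ := Real.sqrt μ with hs
  have hspos : 0 < s := Real.sqrt_pos.mpr hμ
  set e : ℝ → ℂ := fun x => Complex.exp (Complex.I * (s : ℂ) * x) with he
  -- the Wronskian of ψ with its conjugate
  set W : ℝ → ℂ := fun x => ψ x * (starRingEnd ℂ) (ψ' x) - ψ' x * (starRingEnd ℂ) (ψ x) with hW
  -- W has zero derivative on Ioi 0
  have hWderiv : ∀ x ∈ Set.Ioi (0 : ℝ), HasDerivWithinAt W 0 (Set.Ioi (0:ℝ)) x := by
    intro x hx
    have hx0 : (0:ℝ) < x := hx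
    have hD : HasDerivAt W
        (ψ' x * (starRingEnd ℂ) (ψ' x) + ψ x * (starRingEnd ℂ) (ψ'' x)
          - (ψ'' x * (starRingEnd ℂ) (ψ x) + ψ' x * (starRingEnd ℂ) (ψ' x))) x := by
      exact ((hψ' x hx).mul ((hψ'' x hx).star)).sub ((hψ'' x hx).mul ((hψ' x hx).star))
    have heq : ψ'' x = (2 / (x:ℂ)^2 + (q x : ℂ) - (μ : ℂ)) * ψ x := by
      linear_combination -(hψeq x hx)
    have hval : ψ' x * (starRingEnd ℂ) (ψ' x) + ψ x * (starRingEnd ℂ) (ψ'' x)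
          - (ψ'' x * (starRingEnd ℂ) (ψ x) + ψ' x * (starRingEnd ℂ) (ψ' x)) = 0 := by
      rw [heq]
      simp only [map_mul, map_sub, map_add, map_div₀, map_pow, map_ofNat,
        Complex.conj_ofReal]
      ring
    rw [hval] at hD
    exact hD.hasDerivWithinAt
  -- W is constant on Ioi 0
  have hWconst : ∀ x ∈ Set.Ioi (0:ℝ), ∀ y ∈ Set.Ioi (0:ℝ), W x = W y := by
    intro x hx y hy
    have h := Convex.norm_image_sub_le_of_norm_hasDerivWithin_le
      (f := W) (f' := fun _ => 0) (C := 0) (fun z hz => hWderiv z hz)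
      (fun z _ => by simp) (convex_Ioi (0:ℝ)) hy hx
    simp only [zero_mul] at h
    exact sub_eq_zero.mp (norm_le_zero_iff.mp h)
  obtain ⟨L, hL⟩ := hφ'0
  -- ψ' = c * φ' on Ioi 0
  have hψ'eq : ∀ x ∈ Set.Ioi (0:ℝ), ψ' x = c * φ' x := by
    intro x hx
    have h1 : HasDerivAt (fun y => c * φ y) (c * φ' x) x := (hφ' x hx).const_mul c
    have hEq : ψ =ᶠ[nhds x] (fun y => c * φ y) := by
      filter_upwards [isOpen_Ioi.mem_nhds hx] with y hy
      exact hc y hy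
    exact (hψ' x hx).unique (h1.congr_of_eventuallyEq hEq)
  -- limit of W at 0⁺ is 0
  have hW0 : Tendsto W (nhdsWithin 0 (Set.Ioi 0)) (nhds 0) := by
    have hlim : Tendsto (fun x => (c * φ x) * (starRingEnd ℂ) (c * φ' x)
        - (c * φ' x) * (starRingEnd ℂ) (c * φ x)) (nhdsWithin 0 (Set.Ioi 0))
        (nhds ((c * 0) * (starRingEnd ℂ) (c * L) - (c * L) * (starRingEnd ℂ) (c * 0))) := by
      exact ((((hφ0.const_mul c).mul ((hL.const_mul c).star))).sub
        ((hL.const_mul c).mul ((hφ0.const_mul c).star)))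
    have hlim' : Tendsto (fun x => (c * φ x) * (starRingEnd ℂ) (c * φ' x)
        - (c * φ' x) * (starRingEnd ℂ) (c * φ x)) (nhdsWithin 0 (Set.Ioi 0)) (nhds 0) := by
      simpa using hlim
    refine hlim'.congr' ?_
    filter_upwards [self_mem_nhdsWithin] with x hx
    simp only [hW, hc x hx, hψ'eq x hx]
  -- unit modulus of e and its conjugate
  have hnorme : ∀ x : ℝ, ‖e x‖ = 1 := by
    intro x
    simp only [he, Complex.norm_exp]
    norm_num [Complex.mul_re, Complex.mul_im]
  have hue : ∀ x : ℝ, e x * (starRingEnd ℂ) (e x) = 1 := by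
    intro x
    have hcon : (starRingEnd ℂ) (e x) = Complex.exp (-(Complex.I * (s:ℂ) * x)) := by
      rw [he, ← Complex.exp_conj]
      congr 1
      simp only [map_mul, Complex.conj_I, Complex.conj_ofReal]
      ring
    rw [hcon, he, ← Complex.exp_add]
    simp
  set A : ℝ → ℂ := fun x => ψ x - Complex.I * (s:ℂ) * e x with hA
  set B : ℝ → ℂ := fun x => ψ' x + (μ:ℂ) * e x with hB
  have hAlim : Tendsto A atTop (nhds 0) := hψasym
  have hBlim : Tendsto B atTop (nhds 0) := hψasym'
  have hcAlim : Tendsto (fun x => (starRingEnd ℂ) (A x)) atTop (nhds 0) := by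
    simpa using hAlim.star
  have hcBlim : Tendsto (fun x => (starRingEnd ℂ) (B x)) atTop (nhds 0) := by
    simpa using hBlim.star
  -- multiplication by a unit-modulus function preserves tendsto to 0
  have hmul : ∀ (f g : ℝ → ℂ), Tendsto f atTop (nhds 0) → (∀ x, ‖g x‖ = 1) →
      Tendsto (fun x => f x * g x) atTop (nhds 0) := by
    intro f g hf hg
    rw [tendsto_zero_iff_norm_tendsto_zero] at hf ⊢
    simpa [norm_mul, hg] using hf
  -- the identity for W at infinity
  have hident : ∀ x : ℝ, W x = (A x * (starRingEnd ℂ) (B x))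
      + ((-(μ:ℂ)) * A x) * ((starRingEnd ℂ) (e x))
      + (Complex.I * (s:ℂ) * (starRingEnd ℂ) (B x)) * e x
      + (-(B x * (starRingEnd ℂ) (A x)))
      + (Complex.I * (s:ℂ) * B x) * ((starRingEnd ℂ) (e x))
      + ((μ:ℂ) * (starRingEnd ℂ) (A x)) * e x
      + (-(2 * Complex.I * (s:ℂ) * (μ:ℂ))) := by
    intro x
    simp only [hW, hA, hB, map_sub, map_add, map_mul, Complex.conj_I, Complex.conj_ofReal]
    linear_combination (-2 * Complex.I * (s:ℂ) * (μ:ℂ)) * hue x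
  have hconjnorm : ∀ x : ℝ, ‖(starRingEnd ℂ) (e x)‖ = 1 := by
    intro x; rw [RCLike.norm_conj]; exact hnorme x
  have hWinf : Tendsto W atTop (nhds (-(2 * Complex.I * (s:ℂ) * (μ:ℂ)))) := by
    have h1 : Tendsto (fun x => A x * (starRingEnd ℂ) (B x)) atTop (nhds 0) := by
      simpa using hAlim.mul hcBlim
    have h2 : Tendsto (fun x => ((-(μ:ℂ)) * A x) * ((starRingEnd ℂ) (e x))) atTop (nhds 0) :=
      hmul _ _ (by simpa using hAlim.const_mul (-(μ:ℂ))) hconjnorm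
    have h3 : Tendsto (fun x => (Complex.I * (s:ℂ) * (starRingEnd ℂ) (B x)) * e x)
        atTop (nhds 0) :=
      hmul _ _ (by simpa using hcBlim.const_mul (Complex.I * (s:ℂ))) hnorme
    have h4 : Tendsto (fun x => -(B x * (starRingEnd ℂ) (A x))) atTop (nhds 0) := by
      simpa using (hBlim.mul hcAlim).neg
    have h5 : Tendsto (fun x => (Complex.I * (s:ℂ) * B x) * ((starRingEnd ℂ) (e x)))
        atTop (nhds 0) :=
      hmul _ _ (by simpa using hBlim.const_mul (Complex.I * (s:ℂ))) hconjnorm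
    have h6 : Tendsto (fun x => ((μ:ℂ) * (starRingEnd ℂ) (A x)) * e x) atTop (nhds 0) :=
      hmul _ _ (by simpa using hcAlim.const_mul (μ:ℂ)) hnorme
    have h7 : Tendsto (fun _ : ℝ => -(2 * Complex.I * (s:ℂ) * (μ:ℂ))) atTop
        (nhds (-(2 * Complex.I * (s:ℂ) * (μ:ℂ)))) := tendsto_const_nhds
    have hsum := ((((((h1.add h2).add h3).add h4).add h5).add h6).add h7)
    simp only [zero_add, add_zero] at hsum
    exact hsum.congr fun x => (hident x).symm
  -- W is constantly W 1, so both limits coincide with W 1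
  have h1mem : (1:ℝ) ∈ Set.Ioi (0:ℝ) := by norm_num
  have hWzero : W 1 = 0 := by
    have ht : Tendsto W (nhdsWithin 0 (Set.Ioi 0)) (nhds (W 1)) := by
      refine tendsto_const_nhds.congr' ?_
      filter_upwards [self_mem_nhdsWithin] with x hx
      exact (hWconst x hx 1 h1mem).symm
    exact tendsto_nhds_unique ht hW0
  have hWval : W 1 = -(2 * Complex.I * (s:ℂ) * (μ:ℂ)) := by
    have ht : Tendsto W atTop (nhds (W 1)) := by
      refine tendsto_const_nhds.congr' ?_
      filter_upwards [Filter.Ioi_mem_atTop 0] with x hx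
      exact (hWconst x hx 1 h1mem).symm
    exact tendsto_nhds_unique ht hWinf
  rw [hWzero] at hWval
  have hfin : (2 : ℂ) * Complex.I * (s:ℂ) * (μ:ℂ) = 0 := by linear_combination hWval
  simp [Complex.ext_iff, Complex.I_ne_zero, hspos.ne', hμ.ne'] at hfin
end
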